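/- Let C ⊆ F₂ⁿ be a doubly even binary code, and define σ(c) ≡ wt(c)/4 (mod 2), χ(c,d) ≡ wt(c∩d)/2 (mod 2), α(c,d,e) ≡ wt(c∩d∩e) (mod 2) for c, d, e ∈ C, with values in Z = ℤ/2ℤ. Then (C,σ,χ,α) is a coded vector space over F₂: writing Z additively, for all c, d, e, f ∈ C one has χ(c,c) = 0; χ(c,d) = χ(d,c); α(c,d,d) = α(d,c,d) = α(d,d,c) = 0; α is symmetric in its arguments; σ(c+d) = σ(c) + σ(d) + χ(c,d); χ(c+d,e) = χ(c,e) + χ(d,e) + α(c,d,e); and α(c+d,e,f) = α(c,e,f) + α(d,e,f). -/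
import Mathlib

/-- The Hamming weight of a binary vector. -/
def wt {n : ℕ} (c : Fin n → ZMod 2) : ℕ :=
  (Finset.univ.filter fun i => c i ≠ 0).card

/-- The number of coordinates where both vectors are nonzero. -/
def wt2 {n : ℕ} (c d : Fin n → ZMod 2) : ℕ :=
  (Finset.univ.filter fun i => c i ≠ 0 ∧ d i ≠ 0).card

/-- The number of coordinates where all three vectors are nonzero. -/
def wt3 {n : ℕ} (c d e : Fin n → ZMod 2) : ℕ :=
  (Finset.univ.filter fun i => c i ≠ 0 ∧ d i ≠ 0 ∧ e i ≠ 0).card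

lemma zmod2_cases (x : ZMod 2) : x = 0 ∨ x = 1 := by revert x; decide

lemma key {n : ℕ} (P : Fin n → Prop) [DecidablePred P] (c d : Fin n → ZMod 2) :
    (Finset.univ.filter fun i => (c + d) i ≠ 0 ∧ P i).card
      + 2 * (Finset.univ.filter fun i => (c i ≠ 0 ∧ d i ≠ 0) ∧ P i).card
    = (Finset.univ.filter fun i => c i ≠ 0 ∧ P i).card
      + (Finset.univ.filter fun i => d i ≠ 0 ∧ P i).card := by
  simp only [Finset.card_filter]
  rw [Finset.mul_sum, ← Finset.sum_add_distrib, ← Finset.sum_add_distrib]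
  apply Finset.sum_congr rfl
  intro i _
  have h2 : (1 + 1 : ZMod 2) = 0 := by decide
  by_cases hP : P i <;> rcases zmod2_cases (c i) with hc | hc <;>
    rcases zmod2_cases (d i) with hd | hd <;>
    simp [Pi.add_apply, hc, hd, hP, h2]

lemma key1 {n : ℕ} (c d : Fin n → ZMod 2) :
    wt (c + d) + 2 * wt2 c d = wt c + wt d := by
  have := key (fun _ => True) c d
  simpa [wt, wt2] using this

lemma key2 {n : ℕ} (c d e : Fin n → ZMod 2) :
    wt2 (c + d) e + 2 * wt3 c d e = wt2 c e + wt2 d e := by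
  have := key (fun i => e i ≠ 0) c d
  simpa [wt2, wt3, and_assoc] using this

lemma cast2 (a b : ℕ) (h : a % 2 = b % 2) : ((a : ℕ) : ZMod 2) = ((b : ℕ) : ZMod 2) := by
  rw [ZMod.natCast_eq_natCast_iff]
  exact h

theorem stmt14 {n : ℕ} (V : Submodule (ZMod 2) (Fin n → ZMod 2))
    (hV : ∀ c ∈ V, wt c % 4 = 0) :
    ∀ c ∈ V, ∀ d ∈ V, ∀ e ∈ V, ∀ f ∈ V,
      ((wt2 c c / 2 : ℕ) : ZMod 2) = 0 ∧
      ((wt2 c d / 2 : ℕ) : ZMod 2) = ((wt2 d c / 2 : ℕ) : ZMod 2) ∧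
      ((wt3 c d d : ℕ) : ZMod 2) = 0 ∧
      ((wt3 d c d : ℕ) : ZMod 2) = 0 ∧
      ((wt3 d d c : ℕ) : ZMod 2) = 0 ∧
      ((wt3 c d e : ℕ) : ZMod 2) = ((wt3 d c e : ℕ) : ZMod 2) ∧
      ((wt3 c d e : ℕ) : ZMod 2) = ((wt3 d e c : ℕ) : ZMod 2) ∧
      ((wt (c + d) / 4 : ℕ) : ZMod 2)
        = ((wt c / 4 : ℕ) : ZMod 2) + ((wt d / 4 : ℕ) : ZMod 2)
          + ((wt2 c d / 2 : ℕ) : ZMod 2) ∧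
      ((wt2 (c + d) e / 2 : ℕ) : ZMod 2)
        = ((wt2 c e / 2 : ℕ) : ZMod 2) + ((wt2 d e / 2 : ℕ) : ZMod 2)
          + ((wt3 c d e : ℕ) : ZMod 2) ∧
      ((wt3 (c + d) e f : ℕ) : ZMod 2)
        = ((wt3 c e f : ℕ) : ZMod 2) + ((wt3 d e f : ℕ) : ZMod 2) := by
  intro c hc d hd e he f hf
  -- evenness of pairwise intersections
  have even2 : ∀ x ∈ V, ∀ y ∈ V, wt2 x y % 2 = 0 := by
    intro x hx y hy
    have h1 := key1 x y
    have hx4 := hV x hx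
    have hy4 := hV y hy
    have hxy4 := hV (x + y) (V.add_mem hx hy)
    omega
  have wtcc : wt2 c c = wt c := by
    simp [wt, wt2, and_self]
  have w2comm : ∀ x y : Fin n → ZMod 2, wt2 x y = wt2 y x := by
    intro x y
    simp only [wt2]
    congr 1
    ext i
    simp [and_comm]
  have w3cdd : wt3 c d d = wt2 c d := by
    simp only [wt2, wt3]
    congr 1
    ext i
    simp only [Finset.mem_filter, Finset.mem_univ, true_and]; tauto
  have w3dcd : wt3 d c d = wt2 c d := by
    simp only [wt2, wt3]
    congr 1
    ext i
    simp only [Finset.mem_filter, Finset.mem_univ, true_and]; tauto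
  have w3ddc : wt3 d d c = wt2 c d := by
    simp only [wt2, wt3]
    congr 1
    ext i
    simp only [Finset.mem_filter, Finset.mem_univ, true_and]; tauto
  have w3perm1 : wt3 c d e = wt3 d c e := by
    simp only [wt3]; congr 1; ext i; simp only [Finset.mem_filter, Finset.mem_univ, true_and]; tauto
  have w3perm2 : wt3 c d e = wt3 d e c := by
    simp only [wt3]; congr 1; ext i; simp only [Finset.mem_filter, Finset.mem_univ, true_and]; tauto
  have hcd2 := even2 c hc d hd
  refine ⟨?_, ?_, ?_, ?_, ?_, ?_, ?_, ?_, ?_, ?_⟩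
  · have h4 := hV c hc
    have : (wt2 c c / 2) % 2 = 0 % 2 := by rw [wtcc]; omega
    simpa using cast2 _ 0 this
  · rw [w2comm c d]
  · have : wt3 c d d % 2 = 0 % 2 := by rw [w3cdd]; omega
    simpa using cast2 _ 0 this
  · have : wt3 d c d % 2 = 0 % 2 := by rw [w3dcd]; omega
    simpa using cast2 _ 0 this
  · have : wt3 d d c % 2 = 0 % 2 := by rw [w3ddc]; omega
    simpa using cast2 _ 0 this
  · rw [w3perm1]
  · rw [w3perm2]
  · have h1 := key1 c d
    have hc4 := hV c hc
    have hd4 := hV d hd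
    have hcd4 := hV (c + d) (V.add_mem hc hd)
    have : (wt (c + d) / 4) % 2 = (wt c / 4 + wt d / 4 + wt2 c d / 2) % 2 := by omega
    calc ((wt (c + d) / 4 : ℕ) : ZMod 2)
        = ((wt c / 4 + wt d / 4 + wt2 c d / 2 : ℕ) : ZMod 2) := cast2 _ _ this
      _ = _ := by push_cast; ring
  · have h1 := key2 c d e
    have hce := even2 c hc e he
    have hde := even2 d hd e he
    have hcde := even2 (c + d) (V.add_mem hc hd) e he
    have : (wt2 (c + d) e / 2) % 2
        = (wt2 c e / 2 + wt2 d e / 2 + wt3 c d e) % 2 := by omega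
    calc ((wt2 (c + d) e / 2 : ℕ) : ZMod 2)
        = ((wt2 c e / 2 + wt2 d e / 2 + wt3 c d e : ℕ) : ZMod 2) := cast2 _ _ this
      _ = _ := by push_cast; ring
  · have h1 := key (fun i => e i ≠ 0 ∧ f i ≠ 0) c d
    have e1 : wt3 (c + d) e f
        = (Finset.univ.filter fun i => (c + d) i ≠ 0 ∧ e i ≠ 0 ∧ f i ≠ 0).card := rfl
    have : wt3 (c + d) e f
        + 2 * (Finset.univ.filter fun i => (c i ≠ 0 ∧ d i ≠ 0) ∧ e i ≠ 0 ∧ f i ≠ 0).card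
        = wt3 c e f + wt3 d e f := by
      simpa [wt3, and_assoc] using h1
    have h2 : wt3 (c + d) e f % 2 = (wt3 c e f + wt3 d e f) % 2 := by omega
    calc ((wt3 (c + d) e f : ℕ) : ZMod 2)
        = ((wt3 c e f + wt3 d e f : ℕ) : ZMod 2) := cast2 _ _ h2
      _ = _ := by push_cast; ring
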